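/- If A_K is Hurwitz (all eigenvalues have negative real part), X̂ solves the Lyapunov equation A_K X̂ + X̂ A_Kᵀ + W = 0, and X solves the Riccati equation A_K X + X A_Kᵀ + β⁻² X S X + W = 0 with S positive semidefinite, then X - X̂ is positive semidefinite. -/

import Mathlib

open Matrix
/-- A real square matrix is Hurwitz if all its (complex) eigenvalues have
negative real part. -/
def IsHurwitz {n : ℕ} (A : Matrix (Fin n) (Fin n) ℝ) : Prop :=
  ∀ μ ∈ spectrum ℂ (A.map (Complex.ofReal ·)), μ.re < 0

section LyapAux

open Matrix NormedSpace Filter Module.End Topology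
open scoped ENNReal NNReal

attribute [local instance] Matrix.linftyOpNormedRing Matrix.linftyOpNormedAlgebra

variable {n : ℕ}

noncomputable instance : NormedRing (Matrix (Fin n) (Fin n) ℂ) := Matrix.linftyOpNormedRing
example : CompleteSpace (Matrix (Fin n) (Fin n) ℂ) := by infer_instance

lemma exp_mulVec_eig (B : Matrix (Fin n) (Fin n) ℂ) (μ : ℂ) (v : Fin n → ℂ)
    (hv : B *ᵥ v = μ • v) : exp B *ᵥ v = Complex.exp μ • v := by
  have hpow : ∀ k : ℕ, (B ^ k) *ᵥ v = (μ ^ k) • v := by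
    intro k
    induction k with
    | zero => simp
    | succ k ih =>
      rw [pow_succ, ← Matrix.mulVec_mulVec, hv, Matrix.mulVec_smul, ih, smul_smul, pow_succ,
        mul_comm]
  let L : Matrix (Fin n) (Fin n) ℂ →ₗ[ℂ] (Fin n → ℂ) :=
    { toFun := fun M => M *ᵥ v
      map_add' := fun M N => Matrix.add_mulVec M N v
      map_smul' := fun c M => Matrix.smul_mulVec c M v }
  let Lc : Matrix (Fin n) (Fin n) ℂ →L[ℂ] (Fin n → ℂ) := ⟨L, L.continuous_of_finiteDimensional⟩
  have hsum : Summable fun k : ℕ => (Nat.factorial k : ℂ)⁻¹ • B ^ k := expSeries_summable' B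
  have : exp B *ᵥ v = Lc (exp B) := rfl
  rw [this, exp_eq_tsum ℂ, Lc.map_tsum hsum]
  have : ∀ k : ℕ, Lc ((Nat.factorial k : ℂ)⁻¹ • B ^ k) = ((Nat.factorial k : ℂ)⁻¹ * μ ^ k) • v := by
    intro k
    have : Lc ((Nat.factorial k : ℂ)⁻¹ • B ^ k) = (Nat.factorial k : ℂ)⁻¹ • ((B ^ k) *ᵥ v) :=
      Lc.map_smul _ _
    rw [this, hpow, smul_smul]
  rw [tsum_congr this, Summable.tsum_smul_const]
  · congr 1
    rw [Complex.exp_eq_exp_ℂ, exp_eq_tsum ℂ]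
    exact tsum_congr fun k => by rw [smul_eq_mul]
  · exact (expSeries_summable' (𝕂 := ℂ) μ).congr fun k => by simp [smul_eq_mul]

lemma spectrum_exp_subset (B : Matrix (Fin n) (Fin n) ℂ) {z : ℂ}
    (hz : z ∈ spectrum ℂ (exp B)) : ∃ μ ∈ spectrum ℂ B, Complex.exp μ = z := by
  have hspec : ∀ M : Matrix (Fin n) (Fin n) ℂ, spectrum ℂ M = spectrum ℂ (Matrix.toLin' M) :=
    fun M => (AlgEquiv.spectrum_eq Matrix.toLinAlgEquiv' M).symm
  have heig : Module.End.HasEigenvalue (Matrix.toLin' (exp B)) z := by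
    rw [Module.End.hasEigenvalue_iff_mem_spectrum, ← hspec]; exact hz
  set E := Module.End.eigenspace (Matrix.toLin' (exp B)) z with hE
  haveI : Nontrivial E := Submodule.nontrivial_iff_ne_bot.mpr heig
  have hcomm : exp B * B = B * exp B := ((Commute.refl B).exp_left).eq
  have hinv : ∀ x ∈ E, (Matrix.toLin' B) x ∈ E := by
    intro x hx
    rw [hE, Module.End.mem_eigenspace_iff] at hx ⊢
    have : (Matrix.toLin' (exp B)) ((Matrix.toLin' B) x)
        = (Matrix.toLin' B) ((Matrix.toLin' (exp B)) x) := by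
      simp only [Matrix.toLin'_apply, Matrix.mulVec_mulVec, hcomm]
    rw [this, hx, LinearMap.map_smul]
  let g := (Matrix.toLin' B).restrict hinv
  obtain ⟨μ, hμ⟩ := Module.End.exists_eigenvalue g
  obtain ⟨w, hw⟩ := hμ.exists_hasEigenvector
  have hwvec : B *ᵥ (w : Fin n → ℂ) = μ • (w : Fin n → ℂ) := by
    have := hw.apply_eq_smul
    have h2 : ((g w : E) : Fin n → ℂ) = (Matrix.toLin' B) (w : Fin n → ℂ) := rfl
    rw [this] at h2
    rw [Matrix.toLin'_apply] at h2
    exact h2.symm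
  have hμspec : μ ∈ spectrum ℂ B := by
    rw [hspec, ← Module.End.hasEigenvalue_iff_mem_spectrum]
    exact Module.End.hasEigenvalue_of_hasEigenvector
      ⟨Module.End.mem_eigenspace_iff.mpr (by rw [Matrix.toLin'_apply]; exact hwvec),
        by exact_mod_cast fun h => hw.right (Subtype.coe_injective (by simp [h]))⟩
  refine ⟨μ, hμspec, ?_⟩
  have h1 : exp B *ᵥ (w : Fin n → ℂ) = Complex.exp μ • (w : Fin n → ℂ) :=
    exp_mulVec_eig B μ _ hwvec
  have h2 : exp B *ᵥ (w : Fin n → ℂ) = z • (w : Fin n → ℂ) := by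
    have := Module.End.mem_eigenspace_iff.mp w.2
    rw [Matrix.toLin'_apply] at this
    exact this
  have hw0 : (w : Fin n → ℂ) ≠ 0 := by
    intro h
    exact hw.right (Subtype.coe_injective (by simp [h]))
  have := h1.symm.trans h2
  obtain ⟨i, hi⟩ := Function.ne_iff.mp hw0
  have := congrFun this i
  simp only [Pi.smul_apply, smul_eq_mul] at this
  exact mul_right_cancel₀ hi this

lemma pow_norm_tendsto_zero {A : Type*} [NormedRing A] [NormedAlgebra ℂ A] [CompleteSpace A]
    (C : A) (h : spectralRadius ℂ C < 1) :
    Tendsto (fun k : ℕ => ‖C ^ k‖) atTop (𝓝 0) := by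
  obtain ⟨r, hr1, hr2⟩ := ENNReal.lt_iff_exists_nnreal_btwn.mp h
  have h2 := spectrum.pow_nnnorm_pow_one_div_tendsto_nhds_spectralRadius C
  have hev : ∀ᶠ k : ℕ in atTop, (‖C ^ k‖₊ : ℝ≥0∞) ^ (1 / (k : ℝ)) < (r : ℝ≥0∞) :=
    h2.eventually_lt_const hr1
  have key : ∀ᶠ k : ℕ in atTop, ‖C ^ k‖ ≤ (r : ℝ) ^ k := by
    filter_upwards [hev, eventually_ge_atTop 1] with k hk hk1
    have hk0 : (k : ℝ) ≠ 0 := Nat.cast_ne_zero.mpr (by omega)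
    have : ((‖C ^ k‖₊ : ℝ≥0∞) ^ (1 / (k : ℝ))) ^ (k : ℝ) ≤ (r : ℝ≥0∞) ^ (k : ℝ) :=
      ENNReal.rpow_le_rpow hk.le (Nat.cast_nonneg k)
    rw [← ENNReal.rpow_mul, one_div, inv_mul_cancel₀ hk0, ENNReal.rpow_one,
      ENNReal.rpow_natCast, ← ENNReal.coe_pow, ENNReal.coe_le_coe] at this
    calc ‖C ^ k‖ = ((‖C ^ k‖₊ : ℝ≥0) : ℝ) := rfl
      _ ≤ ((r ^ k : ℝ≥0) : ℝ) := by exact_mod_cast this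
      _ = (r : ℝ) ^ k := by push_cast; ring
  have hr3 : (r : ℝ) < 1 := by exact_mod_cast hr2
  exact squeeze_zero' (Eventually.of_forall fun k => norm_nonneg _) key
    (tendsto_pow_atTop_nhds_zero_of_lt_one r.coe_nonneg hr3)

lemma entry_norm_le_linfty (M : Matrix (Fin n) (Fin n) ℂ) (i j : Fin n) : ‖M i j‖ ≤ ‖M‖ := by
  have h1 : ‖M i j‖₊ ≤ ∑ l, ‖M i l‖₊ :=
    Finset.single_le_sum (f := fun l => ‖M i l‖₊) (fun l _ => (zero_le)) (Finset.mem_univ j)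
  have h2 : (∑ l, ‖M i l‖₊) ≤ ‖M‖₊ := by
    rw [Matrix.linfty_opNNNorm_def]
    exact Finset.le_sup (f := fun i => ∑ l, ‖M i l‖₊) (Finset.mem_univ i)
  exact_mod_cast h1.trans h2

lemma hurwitz_pow_entry_tendsto (A : Matrix (Fin n) (Fin n) ℝ)
    (hA : ∀ μ ∈ spectrum ℂ (A.map (Complex.ofReal ·)), μ.re < 0) (i j : Fin n) :
    Tendsto (fun k : ℕ => ((exp A) ^ k) i j) atTop (𝓝 0) := by
  haveI : Nonempty (Fin n) := ⟨i⟩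
  set Ac := A.map (Complex.ofReal ·) with hAc
  let f : Matrix (Fin n) (Fin n) ℝ →ₐ[ℝ] Matrix (Fin n) (Fin n) ℂ :=
    (Algebra.ofId ℝ ℂ).mapMatrix
  have hf : Continuous f := f.toLinearMap.continuous_of_finiteDimensional
  have hfA : f A = Ac := rfl
  have hmap : (exp A).map (Complex.ofReal ·) = exp Ac := by
    have h1 : f (exp A) = exp (f A) := map_exp f hf A
    have h2 : exp (f A) = exp Ac := by rw [hfA]
    exact h1.trans h2
  have hρ : spectralRadius ℂ (exp Ac) < 1 := by
    apply spectrum.spectralRadius_lt_of_forall_lt (r := 1)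
    intro z hz
    obtain ⟨μ, hμ, rfl⟩ := spectrum_exp_subset Ac hz
    have : ‖Complex.exp μ‖ = Real.exp μ.re := Complex.norm_exp μ
    rw [← NNReal.coe_lt_coe, coe_nnnorm, this, NNReal.coe_one]
    exact Real.exp_lt_one_iff.mpr (hA μ hμ)
  have hnorm : Tendsto (fun k : ℕ => ‖(exp Ac) ^ k‖) atTop (𝓝 0) :=
    pow_norm_tendsto_zero _ hρ
  apply squeeze_zero_norm _ hnorm
  intro k
  have hk : ((exp A) ^ k).map (Complex.ofReal ·) = (exp Ac) ^ k := by
    have : f ((exp A) ^ k) = (f (exp A)) ^ k := map_pow f _ k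
    rw [← hmap]; exact this.symm ▸ rfl
  have : ‖(((exp A) ^ k).map (Complex.ofReal ·)) i j‖ ≤ ‖(exp Ac) ^ k‖ := by
    rw [hk]; exact entry_norm_le_linfty _ i j
  simpa using this

lemma lyap_quadform_nonneg (A D Q : Matrix (Fin n) (Fin n) ℝ)
    (hA : ∀ μ ∈ spectrum ℂ (A.map (Complex.ofReal ·)), μ.re < 0)
    (hQ : ∀ u : Fin n → ℝ, 0 ≤ u ⬝ᵥ (Q *ᵥ u))
    (heq : A * D + D * Aᵀ + Q = 0) (v : Fin n → ℝ) : 0 ≤ v ⬝ᵥ (D *ᵥ v) := by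
  set x : ℝ → Fin n → ℝ := fun t => exp (t • Aᵀ) *ᵥ v with hxdef
  let L : Matrix (Fin n) (Fin n) ℝ →ₗ[ℝ] (Fin n → ℝ) :=
    { toFun := fun M => M *ᵥ v
      map_add' := fun M N => Matrix.add_mulVec M N v
      map_smul' := fun c M => Matrix.smul_mulVec c M v }
  let Lc : Matrix (Fin n) (Fin n) ℝ →L[ℝ] (Fin n → ℝ) := ⟨L, L.continuous_of_finiteDimensional⟩
  have hx : ∀ t : ℝ, HasDerivAt x (Aᵀ *ᵥ x t) t := by
    intro t
    have h1 : HasDerivAt (fun u : ℝ => exp (u • Aᵀ)) (Aᵀ * exp (t • Aᵀ)) t :=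
      hasDerivAt_exp_smul_const' Aᵀ t
    have h2 : HasDerivAt x (Lc (Aᵀ * exp (t • Aᵀ))) t :=
      Lc.hasFDerivAt.comp_hasDerivAt t h1
    have h3 : Lc (Aᵀ * exp (t • Aᵀ)) = Aᵀ *ᵥ x t := by
      show (Aᵀ * exp (t • Aᵀ)) *ᵥ v = _
      rw [← Matrix.mulVec_mulVec]
    rwa [h3] at h2
  set y : ℝ → Fin n → ℝ := fun t => D *ᵥ x t with hydef
  let Dc : (Fin n → ℝ) →L[ℝ] (Fin n → ℝ) :=
    ⟨D.mulVecLin, D.mulVecLin.continuous_of_finiteDimensional⟩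
  have hy : ∀ t : ℝ, HasDerivAt y (D *ᵥ (Aᵀ *ᵥ x t)) t := fun t =>
    Dc.hasFDerivAt.comp_hasDerivAt t (hx t)
  set φ : ℝ → ℝ := fun t => x t ⬝ᵥ y t with hφdef
  have hφ : ∀ t : ℝ, HasDerivAt φ
      ((Aᵀ *ᵥ x t) ⬝ᵥ y t + x t ⬝ᵥ (D *ᵥ (Aᵀ *ᵥ x t))) t := by
    intro t
    have hxi : ∀ i, HasDerivAt (fun s => x s i) ((Aᵀ *ᵥ x t) i) t := fun i =>
      (ContinuousLinearMap.proj (R := ℝ) (φ := fun _ : Fin n => ℝ) i).hasFDerivAt.comp_hasDerivAt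
        t (hx t)
    have hyi : ∀ i, HasDerivAt (fun s => y s i) ((D *ᵥ (Aᵀ *ᵥ x t)) i) t := fun i =>
      (ContinuousLinearMap.proj (R := ℝ) (φ := fun _ : Fin n => ℝ) i).hasFDerivAt.comp_hasDerivAt
        t (hy t)
    have hsum : HasDerivAt (fun s => ∑ i, x s i * y s i)
        (∑ i, ((Aᵀ *ᵥ x t) i * y t i + x t i * (D *ᵥ (Aᵀ *ᵥ x t)) i)) t :=
      HasDerivAt.fun_sum fun i _ => (hxi i).mul (hyi i)
    have : (∑ i, ((Aᵀ *ᵥ x t) i * y t i + x t i * (D *ᵥ (Aᵀ *ᵥ x t)) i))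
        = (Aᵀ *ᵥ x t) ⬝ᵥ y t + x t ⬝ᵥ (D *ᵥ (Aᵀ *ᵥ x t)) := by
      rw [Finset.sum_add_distrib]; rfl
    rw [this] at hsum
    exact hsum
  have key : ∀ t : ℝ, (Aᵀ *ᵥ x t) ⬝ᵥ y t + x t ⬝ᵥ (D *ᵥ (Aᵀ *ᵥ x t))
      = -(x t ⬝ᵥ (Q *ᵥ x t)) := by
    intro t
    have h1 : (Aᵀ *ᵥ x t) ⬝ᵥ y t = x t ⬝ᵥ ((A * D) *ᵥ x t) := by
      rw [hydef]
      show (Aᵀ *ᵥ x t) ⬝ᵥ (D *ᵥ x t) = _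
      rw [Matrix.mulVec_transpose, ← Matrix.dotProduct_mulVec, Matrix.mulVec_mulVec]
    have h2 : x t ⬝ᵥ (D *ᵥ (Aᵀ *ᵥ x t)) = x t ⬝ᵥ ((D * Aᵀ) *ᵥ x t) := by
      rw [Matrix.mulVec_mulVec]
    have h3 : A * D + D * Aᵀ = -Q := by
      have := heq
      rwa [add_eq_zero_iff_eq_neg] at this
    rw [h1, h2, ← dotProduct_add, ← Matrix.add_mulVec, h3, Matrix.neg_mulVec,
      dotProduct_neg]
  have hanti : Antitone φ := by
    apply antitone_of_deriv_nonpos (fun t => (hφ t).differentiableAt)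
    intro t
    rw [(hφ t).deriv, key t]
    exact neg_nonpos.mpr (hQ _)
  have hφ0 : φ 0 = v ⬝ᵥ (D *ᵥ v) := by
    have : x 0 = v := by
      rw [hxdef]; simp [exp_zero, Matrix.one_mulVec]
    rw [hφdef, hydef]; simp only [this]
  have hxk : ∀ k : ℕ, x k = ((exp A) ^ k)ᵀ *ᵥ v := by
    intro k
    show exp ((k : ℝ) • Aᵀ) *ᵥ v = _
    have h : (k : ℝ) • Aᵀ = (k : ℕ) • Aᵀ := (Nat.cast_smul_eq_nsmul ℝ k Aᵀ)
    rw [h, Matrix.exp_nsmul, Matrix.exp_transpose, ← Matrix.transpose_pow]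
  have hxtend : Tendsto (fun k : ℕ => x k) atTop (𝓝 0) := by
    rw [tendsto_pi_nhds]
    intro i
    have : ∀ k : ℕ, x k i = ∑ j, ((exp A) ^ k) j i * v j := by
      intro k
      rw [hxk k]
      simp [Matrix.mulVec, dotProduct, Matrix.transpose_apply]
    simp only [this, Pi.zero_apply]
    have h0 : (0 : ℝ) = ∑ j : Fin n, (0 : ℝ) * v j := by simp
    rw [h0]
    exact tendsto_finset_sum _ fun j _ =>
      (hurwitz_pow_entry_tendsto A hA j i).mul_const (v j)
  have hcont : Continuous (fun u : Fin n → ℝ => u ⬝ᵥ (D *ᵥ u)) :=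
    continuous_id.dotProduct ((continuous_const (y := D)).matrix_mulVec continuous_id)
  have hφtend : Tendsto (fun k : ℕ => φ k) atTop (𝓝 0) := by
    have := (hcont.tendsto 0).comp hxtend
    simpa [hφdef, hydef, Function.comp_def] using this
  have hle : ∀ k : ℕ, φ k ≤ φ 0 := fun k => hanti (Nat.cast_nonneg k)
  have : (0 : ℝ) ≤ φ 0 := le_of_tendsto hφtend (Eventually.of_forall hle)
  rwa [hφ0] at this

theorem lyap_stmt_aux {n : ℕ} (A_K W S Xhat X : Matrix (Fin n) (Fin n) ℝ) (β : ℝ)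
    (hβ : 0 < β)
    (hA : ∀ μ ∈ spectrum ℂ (A_K.map (Complex.ofReal ·)), μ.re < 0)
    (hW : W.PosSemidef) (hS : S.PosSemidef)
    (hXhat : Xhat.IsSymm) (hX : X.IsSymm)
    (hLyap : A_K * Xhat + Xhat * A_Kᵀ + W = 0)
    (hRic : A_K * X + X * A_Kᵀ + (β ^ 2)⁻¹ • (X * S * X) + W = 0) :
    (X - Xhat).PosSemidef := by
  set Q : Matrix (Fin n) (Fin n) ℝ := (β ^ 2)⁻¹ • (X * S * X) with hQdef
  have hXH : Xᴴ = X := by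
    rw [Matrix.conjTranspose_eq_transpose_of_trivial, hX]
  have hps : (X * S * X).PosSemidef := by
    have := hS.mul_mul_conjTranspose_same X
    rwa [hXH] at this
  have hc : (0 : ℝ) ≤ (β ^ 2)⁻¹ := inv_nonneg.mpr (sq_nonneg β)
  have hQuad : ∀ u : Fin n → ℝ, 0 ≤ u ⬝ᵥ (Q *ᵥ u) := by
    intro u
    have h1 := hps.dotProduct_mulVec_nonneg u
    rw [star_trivial] at h1
    rw [hQdef, Matrix.smul_mulVec, dotProduct_smul, smul_eq_mul]
    exact mul_nonneg hc h1
  have heq : A_K * (X - Xhat) + (X - Xhat) * A_Kᵀ + Q = 0 := by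
    have : A_K * (X - Xhat) + (X - Xhat) * A_Kᵀ + Q
        = (A_K * X + X * A_Kᵀ + Q + W) - (A_K * Xhat + Xhat * A_Kᵀ + W) := by
      rw [Matrix.mul_sub, Matrix.sub_mul]
      abel
    rw [this, hRic, hLyap, sub_zero]
  refine posSemidef_iff_dotProduct_mulVec.mpr ⟨?_, ?_⟩
  · show (X - Xhat)ᴴ = X - Xhat
    rw [Matrix.conjTranspose_eq_transpose_of_trivial, (hX.sub hXhat)]
  · intro u
    rw [star_trivial]
    exact lyap_quadform_nonneg A_K (X - Xhat) Q hA hQuad heq u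

end LyapAux

/-- If `A_K` is Hurwitz, `X̂` solves the Lyapunov equation
`A_K X̂ + X̂ A_Kᵀ + W = 0`, and `X` solves the Riccati equation
`A_K X + X A_Kᵀ + β⁻² X S X + W = 0` with `S` positive semidefinite,
then `X - X̂` is positive semidefinite. -/
theorem stmt_0 {n : ℕ} (A_K W S Xhat X : Matrix (Fin n) (Fin n) ℝ) (β : ℝ)
    (hβ : 0 < β)
    (hA : IsHurwitz A_K)
    (hW : W.PosSemidef) (hS : S.PosSemidef)
    (hXhat : Xhat.IsSymm) (hX : X.IsSymm)
    (hLyap : A_K * Xhat + Xhat * A_Kᵀ + W = 0)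
    (hRic : A_K * X + X * A_Kᵀ + (β ^ 2)⁻¹ • (X * S * X) + W = 0) :
    (X - Xhat).PosSemidef :=
  lyap_stmt_aux A_K W S Xhat X β hβ hA hW hS hXhat hX hLyap hRic
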